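/- Deterministic revelation is optimal in the simple example with a more patient agent: let δ_P ≥ δ_A > 0 and let ν be a Borel probability measure on [0,∞) with ∫ e^{-δ_A s} dν(s) ≥ 1/2. Then ∫ (1 - e^{-δ_P s})/δ_P dν(s) ≤ (1 - 2^{-δ_P/δ_A})/δ_P. Moreover, the point mass at T̂ = (log 2)/δ_A satisfies the constraint with equality and attains this bound. -/

import Mathlib

open MeasureTheory Set

noncomputable section

/-- **Deterministic revelation is optimal in the simple example with a more patient
agent.** If `δP ≥ δA > 0` and `ν` is a Borel probability measure on `[0,∞)` satisfying
the agent's participation constraint `∫ e^{-δA s} dν ≥ 1/2`, then the principal's payoff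
`∫ (1 - e^{-δP s})/δP dν` is at most `(1 - 2^{-δP/δA})/δP`; moreover the point mass at
`T̂ = (log 2)/δA` satisfies the constraint with equality and attains this bound. -/
theorem deterministic_revelation_optimal
    (δA δP : ℝ) (hδA : 0 < δA) (hδ : δA ≤ δP) :
    (∀ ν : Measure ℝ, IsProbabilityMeasure ν → ν (Iio 0) = 0 →
      (1/2 : ℝ) ≤ ∫ s, Real.exp (-δA * s) ∂ν →
      ∫ s, (1 - Real.exp (-δP * s)) / δP ∂ν
        ≤ (1 - (2:ℝ) ^ (-(δP / δA))) / δP) ∧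
    (∫ s, Real.exp (-δA * s) ∂(Measure.dirac (Real.log 2 / δA)) = 1/2 ∧
     ∫ s, (1 - Real.exp (-δP * s)) / δP ∂(Measure.dirac (Real.log 2 / δA))
        = (1 - (2:ℝ) ^ (-(δP / δA))) / δP) := by
  have hδP : (0:ℝ) < δP := lt_of_lt_of_le hδA hδ
  set r : ℝ := δP / δA with hr_def
  have hr1 : (1:ℝ) ≤ r := (one_le_div hδA).2 hδ
  have hr0 : (0:ℝ) ≤ r := le_trans zero_le_one hr1
  have hδAr : δA * r = δP := by rw [hr_def, mul_div_cancel₀ _ hδA.ne']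
  constructor
  · intro ν hν hν0 hconstr
    -- a.e. nonnegativity
    have hae : ∀ᵐ s ∂ν, 0 ≤ s := by
      rw [ae_iff]
      convert hν0 using 2
      ext x; simp [not_le]
    -- integrability
    have hint : ∀ c : ℝ, 0 ≤ c → Integrable (fun s => Real.exp (-c * s)) ν := by
      intro c hc
      refine Integrable.mono' (integrable_const (1:ℝ))
        (Real.continuous_exp.comp (continuous_const.mul continuous_id)).aestronglyMeasurable ?_
      filter_upwards [hae] with s hs
      rw [Real.norm_eq_abs, abs_of_pos (Real.exp_pos _)]
      exact Real.exp_le_one_iff.2 (by nlinarith)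
    have hintA := hint δA hδA.le
    have hintP := hint δP hδP.le
    -- exp(-δP s) = (exp(-δA s))^r
    have hpow : ∀ s : ℝ, Real.exp (-δA * s) ^ r = Real.exp (-δP * s) := by
      intro s
      rw [← Real.exp_log (Real.exp_pos (-δA * s)) ]
      rw [← Real.exp_mul, Real.log_exp]
      congr 1; rw [← hδAr]; ring
    -- Jensen
    have hjensen : (∫ s, Real.exp (-δA * s) ∂ν) ^ r ≤ ∫ s, Real.exp (-δP * s) ∂ν := by
      have hconv : ConvexOn ℝ (Ici 0) fun x : ℝ => x ^ r := convexOn_rpow hr1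
      have hcont : ContinuousOn (fun x : ℝ => x ^ r) (Ici 0) := by
        intro x hx
        exact (Real.continuousAt_rpow_const x r (Or.inr hr0)).continuousWithinAt
      have hmem : ∀ᵐ s ∂ν, Real.exp (-δA * s) ∈ Ici (0:ℝ) :=
        Filter.Eventually.of_forall fun s => (Real.exp_pos _).le
      have := hconv.map_integral_le hcont isClosed_Ici hmem hintA ?_
      · calc (∫ s, Real.exp (-δA * s) ∂ν) ^ r
            ≤ ∫ s, (Real.exp (-δA * s)) ^ r ∂ν := this
          _ = ∫ s, Real.exp (-δP * s) ∂ν := by simp_rw [hpow]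
      · exact hintP.congr (Filter.Eventually.of_forall fun s => (hpow s).symm)
    have h2 : (2:ℝ) ^ (-r) ≤ ∫ s, Real.exp (-δP * s) ∂ν := by
      have : ((1:ℝ)/2) ^ r ≤ (∫ s, Real.exp (-δA * s) ∂ν) ^ r :=
        Real.rpow_le_rpow (by norm_num) hconstr hr0
      calc (2:ℝ) ^ (-r) = ((1:ℝ)/2) ^ r := by
            rw [Real.rpow_neg (by norm_num), ← Real.inv_rpow (by norm_num)]
            norm_num
        _ ≤ _ := this
        _ ≤ _ := hjensen
    -- conclude
    have heq : ∫ s, (1 - Real.exp (-δP * s)) / δP ∂ν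
        = (1 - ∫ s, Real.exp (-δP * s) ∂ν) / δP := by
      rw [integral_div, integral_sub (integrable_const 1) hintP, integral_const]
      simp
    rw [heq]
    gcongr
  · have hd1 : ∫ s, Real.exp (-δA * s) ∂(Measure.dirac (Real.log 2 / δA)) = 1/2 := by
      rw [integral_dirac]
      have : -δA * (Real.log 2 / δA) = -Real.log 2 := by
        rw [neg_mul, mul_div_cancel₀ _ hδA.ne']
      rw [this, Real.exp_neg, Real.exp_log (by norm_num)]
      norm_num
    refine ⟨hd1, ?_⟩
    have h2e : Real.exp (-δP * (Real.log 2 / δA)) = (2:ℝ) ^ (-(δP / δA)) := by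
      rw [Real.rpow_def_of_pos (by norm_num : (0:ℝ) < 2),
        show Real.log 2 * -(δP / δA) = -δP * (Real.log 2 / δA) by ring]
    rw [integral_dirac, h2e]

end
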